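/- Let Z₊ be a rest point of V with V′(Z₊) = 0 and V″(Z₊) = −μ² < 0 for some μ > 0, and let ζ be a nonconstant solution of ζ″ + V′(ζ) = 0 with ζ(x) → Z₊ and ζ′(x) → 0 as x → +∞. Then ζ converges to Z₊ exponentially: for every ε ∈ (0, μ) there exists a constant C > 0 such that |ζ(x) − Z₊| + |ζ′(x)| ≤ C e^{−(μ−ε)x} for all x ≥ 0. -/

import Mathlib

open Filter

lemma energy_const (V ζ : ℝ → ℝ) (hV : ContDiff ℝ 2 V) (hζ : ContDiff ℝ 2 ζ)
    (hode : ∀ x, deriv (deriv ζ) x + deriv V (ζ x) = 0)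
    (Zp : ℝ) (htop : Tendsto ζ atTop (nhds Zp)) (htop' : Tendsto (deriv ζ) atTop (nhds 0)) :
    ∀ x, (deriv ζ x)^2 = 2*(V Zp - V (ζ x)) := by
  have hζ1 : ContDiff ℝ 1 (deriv ζ) :=
    (contDiff_succ_iff_deriv.mp (show ContDiff ℝ (1+1) ζ by norm_num [hζ])).2.2
  have hζd : Differentiable ℝ ζ := hζ.differentiable (by norm_num)
  have hζ'd : Differentiable ℝ (deriv ζ) := hζ1.differentiable (by norm_num)
  have hVd : Differentiable ℝ V := hV.differentiable (by norm_num)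
  set E : ℝ → ℝ := fun x => (deriv ζ x)^2/2 + V (ζ x) with hE
  have hEderiv : ∀ x, HasDerivAt E 0 x := by
    intro x
    have h1 : HasDerivAt (deriv ζ) (deriv (deriv ζ) x) x := (hζ'd x).hasDerivAt
    have h2 : HasDerivAt ζ (deriv ζ x) x := (hζd x).hasDerivAt
    have h3 : HasDerivAt (fun x => V (ζ x)) (deriv V (ζ x) * deriv ζ x) x :=
      (hVd (ζ x)).hasDerivAt.comp x h2
    have h4 : HasDerivAt (fun x => (deriv ζ x)^2/2)
        (deriv (deriv ζ) x * deriv ζ x) x := by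
      have h := ((h1.mul h1).div_const 2)
      have heq : (fun x => deriv ζ x * deriv ζ x / 2) = (fun x => (deriv ζ x)^2/2) := by
        ext t; ring
      simp only [Pi.mul_apply] at h
      rw [heq] at h
      exact h.congr_deriv (by ring)
    have h5 := h4.add h3
    have hz : deriv (deriv ζ) x * deriv ζ x + deriv V (ζ x) * deriv ζ x = 0 := by
      linear_combination (deriv ζ x) * hode x
    rw [hz] at h5
    exact h5
  have hconst : ∀ x y, E x = E y :=
    is_const_of_deriv_eq_zero (fun x => (hEderiv x).differentiableAt)
      (fun x => (hEderiv x).deriv)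
  have hlim : Tendsto E atTop (nhds ((0:ℝ)^2/2 + V Zp)) :=
    ((htop'.pow 2).div_const 2).add ((hV.continuous.tendsto Zp).comp htop)
  intro x
  have hlim2 : Tendsto E atTop (nhds (E x)) := by
    have : E = fun _ => E x := funext fun y => hconst y x
    rw [this]; exact tendsto_const_nhds
  have := tendsto_nhds_unique hlim2 hlim
  have hx : (deriv ζ x)^2/2 + V (ζ x) = V Zp := by simpa using this
  linarith

lemma taylor_bd (V : ℝ → ℝ) (hV : ContDiff ℝ 2 V) (Zp μ : ℝ)
    (hrest : deriv V Zp = 0) (hspec : deriv (deriv V) Zp = -μ^2) (δ : ℝ) (hδ : 0 < δ) :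
    ∃ r > 0, ∀ z, |z - Zp| ≤ r →
      |deriv V z + μ^2 * (z - Zp)| ≤ δ * |z - Zp| ∧
      |V Zp - V z - μ^2 * (z - Zp)^2 / 2| ≤ δ * (z - Zp)^2 := by
  have hV1 : ContDiff ℝ 1 (deriv V) :=
    (contDiff_succ_iff_deriv.mp (show ContDiff ℝ (1+1) V by norm_num [hV])).2.2
  have hVd : Differentiable ℝ V := hV.differentiable (by norm_num)
  have hd : HasDerivAt (deriv V) (-μ^2) Zp := by
    have := ((hV1.differentiable (by norm_num)) Zp).hasDerivAt
    rwa [hspec] at this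
  have ho := (hasDerivAt_iff_isLittleO.mp hd).def hδ
  rw [Metric.eventually_nhds_iff] at ho
  obtain ⟨r', hr', hball⟩ := ho
  have key : ∀ w : ℝ, |w - Zp| ≤ r'/2 → |deriv V w + μ^2 * (w - Zp)| ≤ δ * |w - Zp| := by
    intro w hw
    have h := hball (show dist w Zp < r' by rw [Real.dist_eq]; linarith)
    have he : deriv V w - deriv V Zp - (w - Zp) • (-μ^2) = deriv V w + μ^2 * (w - Zp) := by
      rw [hrest, smul_eq_mul]; ring
    rw [he] at h
    simpa [Real.norm_eq_abs] using h
  refine ⟨r'/2, by positivity, fun z hz => ⟨key z hz, ?_⟩⟩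
  set g : ℝ → ℝ := fun z => V Zp - V z - μ^2*(z-Zp)^2/2 with hgdef
  have hg' : ∀ w : ℝ, HasDerivAt g (-(deriv V w + μ^2*(w - Zp))) w := by
    intro w
    have h1 : HasDerivAt V (deriv V w) w := (hVd w).hasDerivAt
    have hq : HasDerivAt (fun z : ℝ => (z - Zp)^2) (2*(w-Zp)) w := by
      have := ((hasDerivAt_id w).sub_const Zp).pow 2
      norm_num at this
      exact this
    have h2 := (hq.const_mul (μ^2)).div_const 2
    have h3 := ((hasDerivAt_const w (V Zp)).sub h1).sub h2
    exact h3.congr_deriv (by ring)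
  have hmvt := Convex.norm_image_sub_le_of_norm_hasDerivWithin_le
    (f := g) (f' := fun w => -(deriv V w + μ^2*(w - Zp))) (C := δ * |z - Zp|)
    (s := Metric.closedBall Zp |z - Zp|)
    (fun w _ => (hg' w).hasDerivWithinAt)
    (fun w hw => by
      rw [Metric.mem_closedBall, Real.dist_eq] at hw
      rw [Real.norm_eq_abs, abs_neg]
      calc |deriv V w + μ^2*(w - Zp)| ≤ δ * |w - Zp| := key w (le_trans hw hz)
        _ ≤ δ * |z - Zp| := by nlinarith [abs_nonneg (w - Zp)])
    (convex_closedBall Zp |z - Zp|)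
    (Metric.mem_closedBall_self (abs_nonneg _))
    (by rw [Metric.mem_closedBall, Real.dist_eq])
  have hgZp : g Zp = 0 := by simp [hgdef]
  rw [hgZp, sub_zero, Real.norm_eq_abs, Real.norm_eq_abs] at hmvt
  calc |V Zp - V z - μ^2 * (z - Zp)^2 / 2| = |g z| := by rw [hgdef]
    _ ≤ δ * |z - Zp| * |z - Zp| := hmvt
    _ = δ * (z - Zp)^2 := by rw [mul_assoc, ← abs_mul, ← sq, abs_sq]

lemma gronwall_zero (m dm : ℝ → ℝ) (K a b : ℝ) (hab : a ≤ b)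
    (hd : ∀ x, HasDerivAt m (dm x) x)
    (hb : ∀ x ∈ Set.Icc a b, |dm x| ≤ K * m x)
    (hpos : ∀ x, 0 ≤ m x) :
    (m a = 0 → ∀ x ∈ Set.Icc a b, m x = 0) ∧ (m b = 0 → ∀ x ∈ Set.Icc a b, m x = 0) := by
  have hmdiff : Differentiable ℝ m := fun x => (hd x).differentiableAt
  have hmc : Continuous m := hmdiff.continuous
  constructor
  · intro ha x hx
    set f : ℝ → ℝ := fun x => m x * Real.exp (-K * x) with hfdef
    have hfd : ∀ x, HasDerivAt f ((dm x - K * m x) * Real.exp (-K * x)) x := by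
      intro x
      have h1 := (hd x).mul (((hasDerivAt_id x).const_mul (-K)).exp)
      simp only [id_eq] at h1
      exact h1.congr_deriv (by ring)
    have hanti : AntitoneOn f (Set.Icc a b) := by
      apply antitoneOn_of_deriv_nonpos (convex_Icc a b)
        (Continuous.continuousOn (hmc.mul (by continuity)))
        (fun x _ => ((hfd x).differentiableAt).differentiableWithinAt)
      intro x hx'
      rw [interior_Icc] at hx'
      change deriv f x ≤ 0
      rw [(hfd x).deriv]
      have hbx := hb x (Set.mem_Icc.mpr ⟨le_of_lt hx'.1, le_of_lt hx'.2⟩)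
      have : dm x - K * m x ≤ 0 := by
        have := abs_le.mp hbx
        linarith [this.2]
      exact mul_nonpos_of_nonpos_of_nonneg this (Real.exp_pos _).le
    have hfa : f a = 0 := by simp [hfdef, ha]
    have := hanti (Set.left_mem_Icc.mpr hab) hx hx.1
    rw [hfa] at this
    simp only [hfdef] at this
    have hexp := Real.exp_pos (-K * x)
    nlinarith [hpos x]
  · intro hbz x hx
    set g : ℝ → ℝ := fun x => m x * Real.exp (K * x) with hgdef
    have hgd : ∀ x, HasDerivAt g ((dm x + K * m x) * Real.exp (K * x)) x := by
      intro x
      have h1 := (hd x).mul (((hasDerivAt_id x).const_mul K).exp)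
      simp only [id_eq] at h1
      exact h1.congr_deriv (by ring)
    have hmono : MonotoneOn g (Set.Icc a b) := by
      apply monotoneOn_of_deriv_nonneg (convex_Icc a b)
        (Continuous.continuousOn (hmc.mul (by continuity)))
        (fun x _ => ((hgd x).differentiableAt).differentiableWithinAt)
      intro x hx'
      rw [interior_Icc] at hx'
      change 0 ≤ deriv g x
      rw [(hgd x).deriv]
      have hbx := hb x (Set.mem_Icc.mpr ⟨le_of_lt hx'.1, le_of_lt hx'.2⟩)
      have : 0 ≤ dm x + K * m x := by
        have := abs_le.mp hbx
        linarith [this.1]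
      exact mul_nonneg this (Real.exp_pos _).le
    have hgb : g b = 0 := by simp [hgdef, hbz]
    have := hmono hx (Set.right_mem_Icc.mpr hab) hx.2
    rw [hgb] at this
    simp only [hgdef] at this
    have hexp := Real.exp_pos (K * x)
    nlinarith [hpos x]

lemma sign_const (f : ℝ → ℝ) (hf : Continuous f) (A : ℝ) (h : ∀ x, A ≤ x → f x ≠ 0) :
    (∀ x, A ≤ x → 0 < f x) ∨ (∀ x, A ≤ x → f x < 0) := by
  by_contra hc
  push_neg at hc
  obtain ⟨⟨a, ha, ha'⟩, ⟨b, hb, hb'⟩⟩ := hc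
  have hfa : f a < 0 := lt_of_le_of_ne ha' (h a ha)
  have hfb : 0 < f b := lt_of_le_of_ne hb' (Ne.symm (h b hb))
  have h0 : (0:ℝ) ∈ Set.uIcc (f a) (f b) := Set.mem_uIcc.mpr (Or.inl ⟨hfa.le, hfb.le⟩)
  obtain ⟨c, hc1, hc2⟩ := intermediate_value_uIcc (hf.continuousOn) h0
  rw [Set.uIcc_eq_union] at hc1
  have hcA : A ≤ c := by
    rcases hc1 with h1 | h1 <;> rcases h1 with ⟨h2, _⟩ <;> [linarith; linarith]
  exact h c hcA hc2

lemma tail_ne (V ζ : ℝ → ℝ) (hV : ContDiff ℝ 2 V) (hζ : ContDiff ℝ 2 ζ)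
    (Zp μ : ℝ) (hμ : 0 < μ)
    (hrest : deriv V Zp = 0) (hspec : deriv (deriv V) Zp = -μ^2)
    (hode : ∀ x : ℝ, deriv (deriv ζ) x + deriv V (ζ x) = 0)
    (hnonconst : ∃ x y, ζ x ≠ ζ y)
    (htop : Tendsto ζ atTop (nhds Zp)) (htop' : Tendsto (deriv ζ) atTop (nhds 0)) :
    ∃ A : ℝ, ∀ x, A ≤ x → ζ x ≠ Zp := by
  have energy := energy_const V ζ hV hζ hode Zp htop htop'
  have hζ1 : ContDiff ℝ 1 (deriv ζ) :=
    (contDiff_succ_iff_deriv.mp (show ContDiff ℝ (1+1) ζ by norm_num [hζ])).2.2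
  have hζd : Differentiable ℝ ζ := hζ.differentiable (by norm_num)
  have hζ'd : Differentiable ℝ (deriv ζ) := hζ1.differentiable (by norm_num)
  obtain ⟨r, hr, htay⟩ := taylor_bd V hV Zp μ hrest hspec (μ^2) (by positivity)
  have hVb : ∀ z, |z - Zp| ≤ r → |deriv V z| ≤ 2*μ^2 * |z - Zp| := by
    intro z hz
    have h1 := (htay z hz).1
    have h2 : |μ^2*(z-Zp)| = μ^2 * |z-Zp| := by
      rw [abs_mul, abs_of_nonneg (by positivity : (0:ℝ) ≤ μ^2)]
    have h3 : deriv V z = (deriv V z + μ^2*(z-Zp)) + (-(μ^2*(z-Zp))) := by ring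
    rw [h3]
    refine le_trans (abs_add_le _ _) ?_
    rw [abs_neg, h2]
    linarith
  set m : ℝ → ℝ := fun x => (ζ x - Zp)^2 + (deriv ζ x)^2 with hmdef
  set dm : ℝ → ℝ := fun x => 2*(ζ x - Zp)*deriv ζ x + 2*deriv ζ x*deriv (deriv ζ) x with hdmdef
  set K : ℝ := 2 + 4*μ^2 with hKdef
  have hm : ∀ x, HasDerivAt m (dm x) x := by
    intro x
    have h2 : HasDerivAt (fun x => (ζ x - Zp)^2) (2*(ζ x - Zp)*deriv ζ x) x := by
      have := ((hζd x).hasDerivAt.sub_const Zp).pow 2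
      norm_num at this
      exact this
    have h3 : HasDerivAt (fun x => (deriv ζ x)^2) (2*deriv ζ x*deriv (deriv ζ) x) x := by
      have := ((hζ'd x).hasDerivAt).pow 2
      norm_num at this
      exact this
    exact h2.add h3
  have hmdiff : Differentiable ℝ m := fun x => (hm x).differentiableAt
  have hmc : Continuous m := hmdiff.continuous
  have hmpos : ∀ x, 0 ≤ m x := fun x => by positivity
  have hbd : ∀ x, |ζ x - Zp| ≤ r → |dm x| ≤ K * m x := by
    intro x hx
    have hz2 : deriv (deriv ζ) x = -deriv V (ζ x) := by linarith [hode x]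
    have hw : |deriv V (ζ x)| ≤ 2*μ^2 * |ζ x - Zp| := hVb (ζ x) hx
    have h1 : |dm x| ≤ 2 * |ζ x - Zp| * |deriv ζ x| + 2 * |deriv ζ x| * |deriv V (ζ x)| := by
      rw [hdmdef]
      simp only [hz2]
      calc |2*(ζ x - Zp)*deriv ζ x + 2*deriv ζ x*(-deriv V (ζ x))|
          ≤ |2*(ζ x - Zp)*deriv ζ x| + |2*deriv ζ x*(-deriv V (ζ x))| := abs_add_le _ _
        _ = 2 * |ζ x - Zp| * |deriv ζ x| + 2 * |deriv ζ x| * |deriv V (ζ x)| := by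
            rw [abs_mul, abs_mul, abs_mul, abs_mul, abs_neg]
            simp [abs_of_nonneg]
    have h2 : 2 * |deriv ζ x| * |deriv V (ζ x)| ≤ 2 * |deriv ζ x| * (2*μ^2 * |ζ x - Zp|) := by
      have := abs_nonneg (deriv ζ x)
      nlinarith
    have h3 : 2 * |ζ x - Zp| * |deriv ζ x| + 2 * |deriv ζ x| * (2*μ^2 * |ζ x - Zp|) ≤ K * m x := by
      have hmx : m x = (ζ x - Zp)^2 + (deriv ζ x)^2 := rfl
      rw [hKdef, hmx]
      have e1 : |ζ x - Zp|^2 = (ζ x - Zp)^2 := sq_abs _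
      have e2 : |deriv ζ x|^2 = (deriv ζ x)^2 := sq_abs _
      nlinarith [sq_nonneg (|ζ x - Zp| - |deriv ζ x|), abs_nonneg (ζ x - Zp),
        abs_nonneg (deriv ζ x), sq_nonneg μ, sq_nonneg (μ*(|ζ x - Zp| - |deriv ζ x|))]
    linarith
  obtain ⟨A, hA⟩ := Metric.tendsto_atTop.mp htop r hr
  have hAr : ∀ x, A ≤ x → |ζ x - Zp| ≤ r := by
    intro x hx
    have := (hA x hx).le
    rwa [Real.dist_eq] at this
  by_contra hcon
  push_neg at hcon
  obtain ⟨x₀, hx₀A, hx₀⟩ := hcon A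
  have hv₀ : deriv ζ x₀ = 0 := by
    have := energy x₀
    rw [hx₀] at this
    nlinarith [sq_nonneg (deriv ζ x₀)]
  have hm₀ : m x₀ = 0 := by rw [hmdef]; simp [hx₀, hv₀]
  set S : Set ℝ := {x : ℝ | ∀ y, x ≤ y → m y = 0} with hSdef
  have hx₀S : x₀ ∈ S := by
    intro y hy
    refine (gronwall_zero m dm K x₀ y hy hm ?_ hmpos).1 hm₀ y ⟨hy, le_rfl⟩
    intro t ht
    exact hbd t (hAr t (le_trans hx₀A ht.1))
  have hSclosed : IsClosed S := by
    apply isClosed_of_closure_subset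
    intro x hx
    have hgt : ∀ z, x < z → m z = 0 := by
      intro z hz
      obtain ⟨x', hx'S, hx'd⟩ := Metric.mem_closure_iff.mp hx (z - x) (by linarith)
      have hle : x' ≤ z := by
        rw [Real.dist_eq] at hx'd
        have := abs_lt.mp hx'd
        linarith [this.1, this.2]
      exact hx'S z hle
    intro y hy
    rcases lt_or_eq_of_le hy with hlt | heq
    · exact hgt y hlt
    · subst heq
      have h1 : Tendsto m (nhdsWithin x (Set.Ioi x)) (nhds (m x)) :=
        (hmc.tendsto x).mono_left nhdsWithin_le_nhds
      have h2 : Tendsto m (nhdsWithin x (Set.Ioi x)) (nhds 0) := by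
        apply Tendsto.congr' _ tendsto_const_nhds
        filter_upwards [self_mem_nhdsWithin] with z hz
        exact (hgt z hz).symm
      exact tendsto_nhds_unique h1 h2
  have hSopen : IsOpen S := by
    rw [Metric.isOpen_iff]
    intro x hxS
    have hmx : m x = 0 := hxS x le_rfl
    have hζx : |ζ x - Zp| < r := by
      have : (ζ x - Zp)^2 = 0 := by
        have hmx' : (ζ x - Zp)^2 + (deriv ζ x)^2 = 0 := hmx
        nlinarith [sq_nonneg (ζ x - Zp), sq_nonneg (deriv ζ x)]
      have := pow_eq_zero_iff (n := 2) (by norm_num) |>.mp this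
      rw [this]
      simpa using hr
    have hcont : ContinuousAt (fun w => |ζ w - Zp|) x :=
      ((hζd.continuous.sub continuous_const).abs).continuousAt
    have hpre : (fun w => |ζ w - Zp|) ⁻¹' (Set.Iio r) ∈ nhds x :=
      hcont.preimage_mem_nhds (Iio_mem_nhds hζx)
    obtain ⟨η, hη, hball⟩ := Metric.mem_nhds_iff.mp hpre
    refine ⟨η, hη, ?_⟩
    intro y hy z hz
    rcases le_or_gt x z with h | h
    · exact hxS z h
    · have hzy : y ≤ z := hz
      have hzball : ∀ t, t ∈ Set.Icc z x → |ζ t - Zp| ≤ r := by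
        intro t ht
        have hyx : |y - x| < η := by rw [← Real.dist_eq]; exact hy
        have : |t - x| < η := by
          rw [abs_lt] at hyx ⊢
          constructor <;> [linarith [ht.1, hyx.1]; linarith [ht.2]]
        have : t ∈ Metric.ball x η := by rwa [Metric.mem_ball, Real.dist_eq]
        exact (hball this).le
      refine (gronwall_zero m dm K z x h.le hm (fun t ht => hbd t (hzball t ht))
        hmpos).2 hmx z ⟨le_rfl, h.le⟩
  have hSuniv : S = Set.univ := IsClopen.eq_univ ⟨hSclosed, hSopen⟩ ⟨x₀, hx₀S⟩
  have hall : ∀ x, ζ x = Zp := by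
    intro x
    have hxS : x ∈ S := hSuniv ▸ Set.mem_univ x
    have h0 : (ζ x - Zp)^2 + (deriv ζ x)^2 = 0 := hxS x le_rfl
    nlinarith [sq_nonneg (ζ x - Zp), sq_nonneg (deriv ζ x)]
  obtain ⟨a, b, hab⟩ := hnonconst
  exact hab (by rw [hall a, hall b])


set_option maxHeartbeats 1000000


open Filter

/-- **Exponential decay at a nondegenerate rest point.** If `V′(Z₊) = 0` and
`V″(Z₊) = -μ² < 0`, then a nonconstant solution of `ζ″ + V′(ζ) = 0` converging to
`Z₊` (with `ζ′ → 0`) as `x → +∞` converges exponentially: for every `ε ∈ (0, μ)`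
there is `C > 0` with `|ζ(x) − Z₊| + |ζ′(x)| ≤ C e^{−(μ−ε)x}` for all `x ≥ 0`. -/
theorem exponential_decay_at_rest_point (V : ℝ → ℝ) (hV : ContDiff ℝ 2 V)
    (Zp μ : ℝ) (hμ : 0 < μ)
    (hrest : deriv V Zp = 0) (hspec : deriv (deriv V) Zp = -μ^2)
    (ζ : ℝ → ℝ) (hζ : ContDiff ℝ 2 ζ)
    (hode : ∀ x : ℝ, deriv (deriv ζ) x + deriv V (ζ x) = 0)
    (hnonconst : ∃ x y, ζ x ≠ ζ y)
    (htop : Tendsto ζ atTop (nhds Zp))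
    (htop' : Tendsto (deriv ζ) atTop (nhds 0)) :
    ∀ ε : ℝ, 0 < ε → ε < μ → ∃ C : ℝ, 0 < C ∧
      ∀ x : ℝ, 0 ≤ x → |ζ x - Zp| + |deriv ζ x| ≤ C * Real.exp (-(μ - ε) * x) := by
  intro ε hε hεμ
  have hζ1 : ContDiff ℝ 1 (deriv ζ) :=
    (contDiff_succ_iff_deriv.mp (show ContDiff ℝ (1+1) ζ by norm_num [hζ])).2.2
  have hζd : Differentiable ℝ ζ := hζ.differentiable (by norm_num)
  have hζ'd : Differentiable ℝ (deriv ζ) := hζ1.differentiable (by norm_num)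
  set s : ℝ := μ - ε with hsdef
  have hs : 0 < s := by simp [hsdef]; linarith
  set δ : ℝ := ε*(2*μ - ε)/2 with hδdef
  have hδ : 0 < δ := by
    have : 0 < 2*μ - ε := by linarith
    positivity
  have hδ1 : μ^2 - 2*δ = s^2 := by rw [hδdef, hsdef]; ring
  have hδ2 : μ^2 + 2*δ ≤ 4*μ^2 := by rw [hδdef]; nlinarith
  have energy := energy_const V ζ hV hζ hode Zp htop htop'
  obtain ⟨r, hr, htay⟩ := taylor_bd V hV Zp μ hrest hspec δ hδ
  obtain ⟨A₀, hA₀⟩ := tail_ne V ζ hV hζ Zp μ hμ hrest hspec hode hnonconst htop htop'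
  obtain ⟨A₁, hA₁⟩ := Metric.tendsto_atTop.mp htop r hr
  set A : ℝ := max A₀ A₁ with hAdef
  have hAne : ∀ x, A ≤ x → ζ x ≠ Zp := fun x hx => hA₀ x (le_trans (le_max_left _ _) hx)
  have hAr : ∀ x, A ≤ x → |ζ x - Zp| ≤ r := by
    intro x hx
    have := (hA₁ x (le_trans (le_max_right _ _) hx)).le
    rwa [Real.dist_eq] at this
  -- bounds on v² in terms of u²
  have hv2 : ∀ x, A ≤ x → s^2 * (ζ x - Zp)^2 ≤ (deriv ζ x)^2 ∧
      (deriv ζ x)^2 ≤ 4*μ^2 * (ζ x - Zp)^2 := by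
    intro x hx
    have h1 := (htay (ζ x) (hAr x hx)).2
    have h2 := energy x
    have h3 := abs_le.mp h1
    constructor
    · nlinarith [h3.1, h3.2]
    · nlinarith [h3.1, h3.2]
  -- conversion helper
  have hconv : ∀ a b y : ℝ, a * Real.exp (s*y) ≤ b → a ≤ b * Real.exp (-s*y) := by
    intro a b y h
    have he := Real.exp_pos (s*y)
    have : a ≤ b / Real.exp (s*y) := (le_div_iff₀ he).mpr h
    rw [div_eq_mul_inv, ← Real.exp_neg] at this
    rw [neg_mul]
    exact this
  have hmain : ∀ σ : ℝ, σ^2 = 1 → (∀ x, A ≤ x → 0 < σ * (ζ x - Zp)) →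
      ∃ C : ℝ, 0 < C ∧
      ∀ x : ℝ, 0 ≤ x → |ζ x - Zp| + |deriv ζ x| ≤ C * Real.exp (-(μ - ε) * x) := by
    intro σ hσ2 hp
    set p : ℝ → ℝ := fun x => σ * (ζ x - Zp) with hpdef
    set q : ℝ → ℝ := fun x => σ * deriv ζ x with hqdef
    have hpder : ∀ x, HasDerivAt p (q x) x :=
      fun x => ((hζd x).hasDerivAt.sub_const Zp).const_mul σ
    have hpc : Continuous p := continuous_const.mul (hζd.continuous.sub continuous_const)
    have hqc : Continuous q := continuous_const.mul hζ'd.continuous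
    have hpabs : ∀ x, A ≤ x → p x = |ζ x - Zp| := by
      intro x hx
      have h1 : |p x| = |ζ x - Zp| := by
        rw [hpdef]
        simp only [abs_mul]
        have : |σ| = 1 := by nlinarith [sq_abs σ, abs_nonneg σ]
        rw [this, one_mul]
      rw [← h1, abs_of_pos (hp x hx)]
    have hq2 : ∀ x, (q x)^2 = (deriv ζ x)^2 := by
      intro x; rw [hqdef]; simp only [mul_pow, hσ2, one_mul]
    have hp2 : ∀ x, (p x)^2 = (ζ x - Zp)^2 := by
      intro x; rw [hpdef]; simp only [mul_pow, hσ2, one_mul]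
    have hqlow : ∀ x, A ≤ x → s^2 * (p x)^2 ≤ (q x)^2 := by
      intro x hx; rw [hq2, hp2]; exact (hv2 x hx).1
    have hqne : ∀ x, A ≤ x → q x ≠ 0 := by
      intro x hx h0
      have h1 := hqlow x hx
      rw [h0] at h1
      simp at h1
      have h2 : 0 < p x := hp x hx
      nlinarith [mul_pos (mul_pos hs hs) (mul_pos h2 h2)]
    have hplim : Tendsto p atTop (nhds 0) := by
      have := (htop.sub_const Zp).const_mul σ
      simpa using this
    rcases sign_const q hqc A hqne with hqpos | hqneg
    · -- q > 0: contradiction, p increasing but p → 0, p > 0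
      exfalso
      have hmono : MonotoneOn p (Set.Ici A) := by
        apply monotoneOn_of_deriv_nonneg (convex_Ici A) hpc.continuousOn
          (fun x _ => (hpder x).differentiableAt.differentiableWithinAt)
        intro x hx
        rw [interior_Ici] at hx
        rw [(hpder x).deriv]
        exact (hqpos x (le_of_lt hx)).le
      have hle : p (A+1) ≤ 0 := by
        apply ge_of_tendsto hplim
        filter_upwards [eventually_ge_atTop (A+1)] with x hx
        exact hmono (by simp : A+1 ∈ Set.Ici A) (by simp; linarith : x ∈ Set.Ici A) hx
      have h7 : 0 < p (A+1) := hp (A+1) (by linarith)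
      linarith
    · -- q < 0: exponential decay
      have hqle : ∀ x, A ≤ x → q x ≤ -s * p x := by
        intro x hx
        have h1 := hqlow x hx
        have h2 := hqneg x hx
        have h3 : 0 < p x := hp x hx
        nlinarith [mul_pos hs h3]
      set F : ℝ → ℝ := fun x => p x * Real.exp (s*x) with hFdef
      have hFder : ∀ x, HasDerivAt F ((q x + s * p x) * Real.exp (s*x)) x := by
        intro x
        have h1 := (hpder x).mul (((hasDerivAt_id x).const_mul s).exp)
        simp only [id_eq] at h1
        exact h1.congr_deriv (by ring)
      have hFanti : AntitoneOn F (Set.Ici A) := by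
        apply antitoneOn_of_deriv_nonpos (convex_Ici A)
          (hpc.mul (Real.continuous_exp.comp (continuous_const.mul continuous_id))).continuousOn
          (fun x _ => (hFder x).differentiableAt.differentiableWithinAt)
        intro x hx
        rw [interior_Ici] at hx
        show deriv F x ≤ 0
        rw [(hFder x).deriv]
        have := hqle x (le_of_lt hx)
        have h2 : q x + s * p x ≤ 0 := by linarith
        exact mul_nonpos_of_nonpos_of_nonneg h2 (Real.exp_pos _).le
      set C₁ : ℝ := p A * Real.exp (s*A) with hC₁def
      have hpA : 0 < p A := hp A le_rfl
      have hC₁ : 0 < C₁ := mul_pos hpA (Real.exp_pos _)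
      have htail : ∀ x, A ≤ x → |ζ x - Zp| + |deriv ζ x| ≤ (1+2*μ) * C₁ * Real.exp (-s*x) := by
        intro x hx
        have h1 : F x ≤ C₁ := hFanti Set.self_mem_Ici (Set.mem_Ici.mpr hx) hx
        have hpx : p x ≤ C₁ * Real.exp (-s*x) := hconv _ _ _ h1
        have hvb : |deriv ζ x| ≤ 2*μ * p x := by
          have h2 := (hv2 x hx).2
          rw [← hq2, ← hp2] at h2
          have h3 : 0 < p x := hp x hx
          have h4 : |deriv ζ x|^2 ≤ (2*μ*p x)^2 := by
            rw [sq_abs]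
            have h5 := hq2 x
            nlinarith [h2]
          nlinarith [h4, mul_pos hμ h3, abs_nonneg (deriv ζ x)]
        have hub : |ζ x - Zp| = p x := (hpabs x hx).symm
        have hfin : |ζ x - Zp| + |deriv ζ x| ≤ (1+2*μ) * p x := by
          rw [hub]; linarith
        calc |ζ x - Zp| + |deriv ζ x| ≤ (1+2*μ) * p x := hfin
          _ ≤ (1+2*μ) * (C₁ * Real.exp (-s*x)) := by
              have h5 : (0:ℝ) < 1+2*μ := by linarith
              have h6 : 0 < p x := hp x hx
              nlinarith [h6, hpx]
          _ = (1+2*μ) * C₁ * Real.exp (-s*x) := by ring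
      -- compact part
      set B : ℝ := max A 0 with hBdef
      have hB0 : (0:ℝ) ≤ B := le_max_right _ _
      set G : ℝ → ℝ := fun x => (|ζ x - Zp| + |deriv ζ x|) * Real.exp (s*x) with hGdef
      have hGc : Continuous G := by
        apply Continuous.mul
        · exact ((hζd.continuous.sub continuous_const).abs).add (hζ'd.continuous.abs)
        · exact Real.continuous_exp.comp (continuous_const.mul continuous_id)
      obtain ⟨xm, _, hxm⟩ := (isCompact_Icc (a := (0:ℝ)) (b := B)).exists_isMaxOn
        ⟨0, by simp [hB0]⟩ hGc.continuousOn
      set M : ℝ := G xm with hMdef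
      have hM0 : 0 ≤ M := by
        have h6 : G 0 ≤ G xm := hxm (by simp [hB0] : (0:ℝ) ∈ Set.Icc 0 B)
        have hG0 : 0 ≤ G 0 := by
          rw [hGdef]
          positivity
        rw [hMdef]
        linarith
      refine ⟨(1+2*μ) * C₁ + M + 1, by positivity, ?_⟩
      intro x hx
      rcases le_or_gt x B with hxB | hxB
      · have h1 : G x ≤ M := by
          have h1' : G x ≤ G xm := hxm (⟨hx, hxB⟩ : x ∈ Set.Icc 0 B)
          rw [hMdef]; exact h1'
        have h2 : |ζ x - Zp| + |deriv ζ x| ≤ M * Real.exp (-s*x) := hconv _ _ _ h1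
        have h3 : Real.exp (-s*x) > 0 := Real.exp_pos _
        have h4 : (1+2*μ) * C₁ + 1 > 0 := by positivity
        nlinarith
      · have hxA : A ≤ x := le_trans (le_max_left A 0) hxB.le
        have h1 := htail x hxA
        have h3 : Real.exp (-s*x) > 0 := Real.exp_pos _
        nlinarith
  rcases sign_const (fun x => ζ x - Zp) (hζd.continuous.sub continuous_const) A
    (fun x hx => sub_ne_zero_of_ne (hAne x hx)) with hcase | hcase
  · exact hmain 1 (by norm_num) (fun x hx => by simpa using hcase x hx)
  · refine hmain (-1) (by norm_num) (fun x hx => ?_)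
    have := hcase x hx
    nlinarith
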